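/- For k ≥ 3, the generating function for permutations avoiding P_{1,k-1} satisfies F(x) = (k-2)! x^{k-2} / (1 - (k-1)x) + ∑_{r=0}^{k-3} r! x^r. -/

import Mathlib

open Finset Equiv

/-- `π` contains the pattern `τ`: some increasing subsequence of `π` is
order-isomorphic to `τ`. -/
def PContains {k n : ℕ} (τ : Equiv.Perm (Fin k)) (π : Equiv.Perm (Fin n)) : Prop :=
  ∃ f : Fin k ↪o Fin n, ∀ i j : Fin k, τ i < τ j ↔ π (f i) < π (f j)

/-- `π` avoids every pattern in `T`. -/
def PAvoids {k n : ℕ} (π : Equiv.Perm (Fin n)) (T : Set (Equiv.Perm (Fin k))) : Prop :=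
  ∀ τ ∈ T, ¬ PContains τ π

/-- The coset `σ^a P_{l,m}` of the maximal parabolic subgroup of `S_k` (`k = l+m`):
`τ ∈ σ^a P_{l,m}` iff the first `l` (1-based) values of `τ` are a permutation of
`{a+1, ..., a+l}` taken modulo `k` (in 0-based terms: `(τ j - a) mod k < l`). -/
def sigmaP (k l a : ℕ) : Set (Equiv.Perm (Fin k)) :=
  {τ | ∀ j : Fin k, (j : ℕ) < l → ((τ j : ℕ) + k - a) % k < l}

/-- The number of permutations of `S_n` avoiding every pattern in `T ⊆ S_k`. -/
noncomputable def avoidersCard (k : ℕ) (T : Set (Equiv.Perm (Fin k))) (n : ℕ) : ℕ :=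
  {π : Equiv.Perm (Fin n) | PAvoids π T}.ncard

open PowerSeries

namespace GFaux

/-- number of later, larger entries at position `i`. -/
def cstat {m : ℕ} (π : Equiv.Perm (Fin m)) (i : Fin m) : ℕ :=
  (Finset.univ.filter (fun j => i < j ∧ π i < π j)).card

/-- every position has at most `K` later, larger entries. -/
def good (K : ℕ) {m : ℕ} (π : Equiv.Perm (Fin m)) : Prop := ∀ i, cstat π i ≤ K

/-- insert a new minimum value at position `p`. -/
def ins {n : ℕ} (p : Fin (n+1)) (e : Equiv.Perm (Fin n)) : Equiv.Perm (Fin (n+1)) :=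
  ((finSuccEquiv' p).trans (Equiv.optionCongr e)).trans (finSuccEquiv' 0).symm

@[simp] lemma ins_at {n : ℕ} (p : Fin (n+1)) (e : Equiv.Perm (Fin n)) : ins p e p = 0 := by
  simp [ins, finSuccEquiv'_at, finSuccEquiv'_symm_none]

@[simp] lemma ins_succAbove {n : ℕ} (p : Fin (n+1)) (e : Equiv.Perm (Fin n)) (i : Fin n) :
    ins p e (p.succAbove i) = (e i).succ := by
  simp [ins, finSuccEquiv'_succAbove, finSuccEquiv'_symm_some]

lemma ins_injective {n : ℕ} : Function.Injective
    (fun pe : Fin (n+1) × Equiv.Perm (Fin n) => ins pe.1 pe.2) := by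
  rintro ⟨p, e⟩ ⟨q, f⟩ h
  simp only at h
  have hpq : p = q := by
    have h0 : ins p e q = 0 := by rw [h]; exact ins_at q f
    have := (ins p e).injective (h0.trans (ins_at p e).symm)
    exact this.symm
  subst hpq
  have hef : e = f := by
    ext i
    have h1 : ins p e (p.succAbove i) = ins p f (p.succAbove i) := by rw [h]
    rw [ins_succAbove, ins_succAbove] at h1
    exact congrArg Fin.val (Fin.succ_injective _ h1)
  rw [hef]

lemma ins_bijective {n : ℕ} : Function.Bijective
    (fun pe : Fin (n+1) × Equiv.Perm (Fin n) => ins pe.1 pe.2) := by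
  rw [Fintype.bijective_iff_injective_and_card]
  refine ⟨ins_injective, ?_⟩
  simp [Fintype.card_perm, Nat.factorial_succ]

lemma ins_ne_zero {n : ℕ} (p : Fin (n+1)) (e : Equiv.Perm (Fin n)) {j : Fin (n+1)}
    (hj : j ≠ p) : ins p e j ≠ 0 := by
  intro h
  exact hj ((ins p e).injective (h.trans (ins_at p e).symm))

lemma cstat_ins_at {n : ℕ} (p : Fin (n+1)) (e : Equiv.Perm (Fin n)) :
    cstat (ins p e) p = n - p := by
  have h : (Finset.univ.filter (fun j => p < j ∧ ins p e p < ins p e j)) = Finset.Ioi p := by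
    ext j
    simp only [mem_filter, mem_univ, true_and, mem_Ioi, ins_at]
    constructor
    · rintro ⟨h, -⟩; exact h
    · intro h
      refine ⟨h, ?_⟩
      exact (ins p e j).pos_of_ne_zero (ins_ne_zero p e h.ne')
  rw [cstat, h, Fin.card_Ioi]; omega

lemma cstat_ins_succAbove {n : ℕ} (p : Fin (n+1)) (e : Equiv.Perm (Fin n)) (i : Fin n) :
    cstat (ins p e) (p.succAbove i) = cstat e i := by
  rw [cstat, cstat]
  symm
  apply Finset.card_bij (fun j _ => p.succAbove j)
  · intro j hj
    simp only [mem_filter, mem_univ, true_and] at hj ⊢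
    exact ⟨Fin.succAbove_lt_succAbove_iff.mpr hj.1, by
      simp only [ins_succAbove]; exact Fin.succ_lt_succ_iff.mpr hj.2⟩
  · intro a ha b hb hab
    exact Fin.succAbove_right_injective hab
  · intro j hj
    simp only [mem_filter, mem_univ, true_and] at hj
    have hjp : j ≠ p := by
      rintro rfl
      rw [ins_at] at hj
      exact absurd hj.2 (Fin.not_lt.mpr (Fin.zero_le _))
    obtain ⟨j', hj'⟩ := Fin.exists_succAbove_eq hjp
    subst hj'
    refine ⟨j', ?_, rfl⟩
    simp only [mem_filter, mem_univ, true_and]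
    rw [ins_succAbove, ins_succAbove] at hj
    exact ⟨Fin.succAbove_lt_succAbove_iff.mp hj.1, Fin.succ_lt_succ_iff.mp hj.2⟩

lemma good_ins_iff {n : ℕ} (p : Fin (n+1)) (e : Equiv.Perm (Fin n)) (K : ℕ) :
    good K (ins p e) ↔ (n - ↑p ≤ K ∧ good K e) := by
  constructor
  · intro h
    refine ⟨?_, fun i => ?_⟩
    · rw [← cstat_ins_at p e]; exact h p
    · rw [← cstat_ins_succAbove p e i]; exact h _
  · rintro ⟨h1, h2⟩ i
    rcases eq_or_ne i p with rfl | hip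
    · rw [cstat_ins_at]; exact h1
    · obtain ⟨j, hj'⟩ := Fin.exists_succAbove_eq hip
      subst hj'
      rw [cstat_ins_succAbove]; exact h2 j

noncomputable def countGood (K n : ℕ) : ℕ := Nat.card {π : Equiv.Perm (Fin n) // good K π}

lemma card_fin_filter (n K : ℕ) :
    Nat.card {p : Fin (n+1) // n - ↑p ≤ K} = min (n+1) (K+1) := by
  have h1 : ∀ p : Fin (n+1), (n - ↑p ≤ K ↔ (⟨n - K, by omega⟩ : Fin (n+1)) ≤ p) := by
    intro p
    rw [Fin.le_def]
    simp only
    omega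
  rw [Nat.card_eq_fintype_card, Fintype.card_subtype]
  have : Finset.filter (fun p : Fin (n+1) => n - ↑p ≤ K) univ
      = Finset.Ici (⟨n - K, by omega⟩ : Fin (n+1)) := by
    ext p
    simp only [mem_filter, mem_univ, true_and, mem_Ici]
    exact h1 p
  rw [this, Fin.card_Ici]
  simp only
  omega

lemma countGood_zero (K : ℕ) : countGood K 0 = 1 := by
  have h : ∀ π : Equiv.Perm (Fin 0), good K π := fun π i => absurd i.2 (by omega)
  rw [countGood, Nat.card_congr (Equiv.subtypeUnivEquiv h), Nat.card_eq_fintype_card]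
  simp [Fintype.card_perm]

lemma countGood_succ (K n : ℕ) :
    countGood K (n+1) = min (n+1) (K+1) * countGood K n := by
  rw [countGood, countGood, ← card_fin_filter n K]
  rw [← Nat.card_prod]
  apply Nat.card_congr
  have E1 : {pe : Fin (n+1) × Equiv.Perm (Fin n) // n - ↑pe.1 ≤ K ∧ good K pe.2}
      ≃ {π : Equiv.Perm (Fin (n+1)) // good K π} :=
    Equiv.subtypeEquiv (Equiv.ofBijective _ ins_bijective)
      (fun pe => (good_ins_iff pe.1 pe.2 K).symm)
  exact E1.symm.trans (Equiv.subtypeProdEquivProd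
    (p := fun p : Fin (n+1) => n - ↑p ≤ K) (q := fun e : Equiv.Perm (Fin n) => good K e))

lemma countGood_eq (K n : ℕ) :
    countGood K n = ∏ i ∈ Finset.range n, min (i+1) (K+1) := by
  induction n with
  | zero => simp [countGood_zero]
  | succ n ih => rw [countGood_succ, ih, Finset.prod_range_succ]; ring

lemma sigmaP_mem {k : ℕ} (hk : 3 ≤ k) (τ : Equiv.Perm (Fin k)) :
    haveI : NeZero k := ⟨by omega⟩
    (τ ∈ sigmaP k 1 0 ↔ τ 0 = 0) := by
  haveI : NeZero k := ⟨by omega⟩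
  constructor
  · intro h
    have h0 := h 0 (by simp [Fin.val_zero])
    rw [Nat.sub_zero, Nat.add_mod_right, Nat.mod_eq_of_lt (τ 0).isLt] at h0
    have : (τ 0 : ℕ) = 0 := by omega
    exact Fin.ext (by rw [this]; simp)
  · intro h j hj
    have hj0 : j = 0 := Fin.ext (by simpa using hj)
    rw [hj0, h, Nat.sub_zero, Nat.add_mod_right]
    simp

lemma pavoids_iff {k n : ℕ} (hk : 3 ≤ k) (π : Equiv.Perm (Fin n)) :
    PAvoids π (sigmaP k 1 0) ↔ good (k - 2) π := by
  haveI : NeZero k := ⟨by omega⟩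
  constructor
  · -- avoid → good
    intro h i
    by_contra hc
    push_neg at hc
    have hcard : k - 1 ≤ cstat π i := by omega
    obtain ⟨J', hJ'sub, hJ'card⟩ := Finset.exists_subset_card_eq hcard
    have hiJ' : i ∉ J' := by
      intro hmem
      have := hJ'sub hmem
      rw [mem_filter] at this
      exact lt_irrefl i this.2.1
    have hscard : (insert i J').card = k := by
      rw [Finset.card_insert_of_notMem hiJ', hJ'card]; omega
    set s := insert i J' with hs
    set f := s.orderEmbOfFin hscard with hf
    have hmin : s.min' (Finset.card_pos.mp (hscard.symm ▸ by omega)) = i := by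
      apply le_antisymm
      · exact Finset.min'_le _ _ (Finset.mem_insert_self i J')
      · apply Finset.le_min'
        intro y hy
        rcases Finset.mem_insert.mp hy with rfl | hy'
        · exact le_refl _
        · have := hJ'sub hy'
          rw [mem_filter] at this
          exact (this.2.1).le
    have hf0 : f 0 = i := by
      rw [hf]
      have : (0 : Fin k) = ⟨0, by omega⟩ := rfl
      rw [this, Finset.orderEmbOfFin_zero hscard (by omega)]
      exact hmin
    have hfJ' : ∀ a : Fin k, a ≠ 0 → f a ∈ J' := by
      intro a ha
      have hmem : f a ∈ s := Finset.orderEmbOfFin_mem s hscard a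
      rcases Finset.mem_insert.mp hmem with heq | h'
      · exfalso
        exact ha (f.injective (heq.trans hf0.symm))
      · exact h'
    have key : ∀ a : Fin k, a ≠ 0 → π (f 0) < π (f a) := by
      intro a ha
      have := hJ'sub (hfJ' a ha)
      rw [mem_filter] at this
      rw [hf0]
      exact this.2.2
    -- build the pattern τ
    set g : Fin k → Fin n := fun a => π (f a) with hg
    have ginj : Function.Injective g := fun a b hab => f.injective (π.injective hab)
    set t := Finset.image g Finset.univ with ht
    have htcard : t.card = k := by
      rw [ht, Finset.card_image_of_injective _ ginj, Finset.card_univ, Fintype.card_fin]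
    set oi := t.orderIsoOfFin htcard with hoi
    have gmem : ∀ a, g a ∈ t := fun a => Finset.mem_image_of_mem g (Finset.mem_univ a)
    set τf : Fin k → Fin k := fun a => oi.symm ⟨g a, gmem a⟩ with hτf
    have τfinj : Function.Injective τf := by
      intro a b hab
      rw [hτf] at hab
      have := oi.symm.injective hab
      exact ginj (Subtype.ext_iff.mp this)
    have τfbij : Function.Bijective τf := Finite.injective_iff_bijective.mp τfinj
    set τ := Equiv.ofBijective τf τfbij with hτ
    have hτlt : ∀ a b, τ a < τ b ↔ g a < g b := by
      intro a b
      rw [hτ]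
      show τf a < τf b ↔ _
      rw [hτf]
      simp only
      rw [OrderIso.lt_iff_lt]
      exact Subtype.mk_lt_mk
    have hτ0 : τ 0 = 0 := by
      by_contra h0
      have hb : τ.symm 0 ≠ 0 := by
        intro hb0
        exact h0 ((τ.symm_apply_eq.mp hb0).symm)
      have : τ 0 < τ (τ.symm 0) := (hτlt 0 (τ.symm 0)).mpr (key _ hb)
      rw [Equiv.apply_symm_apply] at this
      simp [Fin.lt_def] at this
    exact h τ ((sigmaP_mem hk τ).mpr hτ0) ⟨f, fun a b => hτlt a b⟩
  · -- good → avoid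
    intro h τ hτmem ⟨f, hf⟩
    have hτ0 : τ 0 = 0 := (sigmaP_mem hk τ).mp hτmem
    have hcard : k - 1 ≤ cstat π (f 0) := by
      rw [cstat]
      have := Finset.card_le_card_of_injOn (f := fun a : Fin k => f a)
        (s := Finset.univ.erase 0)
        (t := Finset.univ.filter (fun j => f 0 < j ∧ π (f 0) < π j))
        ?_ ?_
      · rwa [Finset.card_erase_of_mem (Finset.mem_univ _), Finset.card_univ,
          Fintype.card_fin] at this
      · intro a ha
        have ha0 : a ≠ 0 := Finset.ne_of_mem_erase ha
        rw [Finset.mem_coe, Finset.mem_filter]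
        refine ⟨Finset.mem_univ _, f.lt_iff_lt.mpr ((Fin.pos_iff_ne_zero' a).mpr ha0), ?_⟩
        apply (hf 0 a).mp
        rw [hτ0]
        exact (Fin.pos_iff_ne_zero' (τ a)).mpr
          (fun hcc => ha0 (τ.injective (hcc.trans hτ0.symm)))
      · exact fun a _ b _ hab => f.injective hab
    have := h (f 0)
    omega

lemma inv_one_sub (a : ℚ) :
    (1 - PowerSeries.C (R := ℚ) a * PowerSeries.X)⁻¹ = PowerSeries.mk fun n => a ^ n := by
  rw [PowerSeries.inv_eq_iff_mul_eq_one (by simp)]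
  have : (PowerSeries.mk fun n => a ^ n) * (1 - PowerSeries.C (R := ℚ) a * PowerSeries.X)
      = (PowerSeries.mk fun n => a ^ n) - PowerSeries.C (R := ℚ) a *
        ((PowerSeries.mk fun n => a ^ n) * PowerSeries.X) := by ring
  rw [this]
  ext n
  cases n with
  | zero => simp
  | succ m =>
    rw [map_sub, PowerSeries.coeff_C_mul, PowerSeries.coeff_succ_mul_X]
    simp [pow_succ, mul_comm]

lemma coeff_main (c a : ℚ) (K n : ℕ) :
    (PowerSeries.coeff (R := ℚ) n) (PowerSeries.C (R := ℚ) c * PowerSeries.X ^ K *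
      (PowerSeries.mk fun m => a ^ m)) = if K ≤ n then c * a ^ (n - K) else 0 := by
  have : PowerSeries.C (R := ℚ) c * PowerSeries.X ^ K * (PowerSeries.mk fun m => a ^ m)
      = (PowerSeries.C (R := ℚ) c * (PowerSeries.mk fun m => a ^ m)) * PowerSeries.X ^ K := by ring
  rw [this, PowerSeries.coeff_mul_X_pow', PowerSeries.coeff_C_mul, PowerSeries.coeff_mk]

lemma coeff_tail (K n : ℕ) :
    (PowerSeries.coeff (R := ℚ) n) (∑ r ∈ Finset.range K,
        PowerSeries.C (R := ℚ) (r.factorial : ℚ) * PowerSeries.X ^ r)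
      = if n < K then (n.factorial : ℚ) else 0 := by
  rw [map_sum]
  have h : ∀ r ∈ Finset.range K, (PowerSeries.coeff (R := ℚ) n)
      (PowerSeries.C (R := ℚ) (r.factorial : ℚ) * PowerSeries.X ^ r)
      = if r = n then (r.factorial : ℚ) else 0 := by
    intro r _
    rw [PowerSeries.coeff_C_mul, PowerSeries.coeff_X_pow]
    split_ifs with h1 h2 h2
    · ring
    · exact absurd h1.symm h2
    · exact absurd h2.symm h1
    · ring
  rw [Finset.sum_congr rfl h, Finset.sum_ite_eq' (Finset.range K) n
    (fun r => (r.factorial : ℚ))]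
  simp [Finset.mem_range]

lemma prod_min_lt {K n : ℕ} (h : n ≤ K + 1) :
    ∏ i ∈ Finset.range n, min (i+1) (K+1) = n.factorial := by
  induction n with
  | zero => simp
  | succ m ih =>
    rw [Finset.prod_range_succ, ih (by omega), Nat.factorial_succ,
      Nat.min_eq_left (by omega)]
    ring

lemma prod_min_ge {K n : ℕ} (h : K ≤ n) :
    ∏ i ∈ Finset.range n, min (i+1) (K+1) = K.factorial * (K+1)^(n-K) := by
  induction n with
  | zero =>
    have hK : K = 0 := by omega
    subst hK
    simp
  | succ m ih =>
    rcases Nat.lt_or_ge m K with hm | hm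
    · have hKm : K = m + 1 := by omega
      subst hKm
      rw [prod_min_lt (by omega)]
      simp
    · rw [Finset.prod_range_succ, ih hm, Nat.min_eq_right (by omega)]
      have : m + 1 - K = (m - K) + 1 := by omega
      rw [this, pow_succ]
      ring

end GFaux

theorem generating_function_P1km1 (k : ℕ) (hk : 3 ≤ k) :
    (PowerSeries.mk fun n => (avoidersCard k (sigmaP k 1 0) n : ℚ))
      = PowerSeries.C (R := ℚ) ((k - 2).factorial : ℚ) *
            (PowerSeries.X : PowerSeries ℚ) ^ (k - 2) *
            (1 - PowerSeries.C (R := ℚ) ((k : ℚ) - 1) * PowerSeries.X)⁻¹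
          + ∑ r ∈ Finset.range (k - 2),
              PowerSeries.C (R := ℚ) (r.factorial : ℚ) * (PowerSeries.X : PowerSeries ℚ) ^ r := by
  set K := k - 2 with hK
  have hk2 : k = K + 2 := by omega
  have ha : ((k : ℚ) - 1) = ((K + 1 : ℕ) : ℚ) := by
    rw [hk2]; push_cast; ring
  have hcount : ∀ n, avoidersCard k (sigmaP k 1 0) n
      = ∏ i ∈ Finset.range n, min (i+1) (K+1) := by
    intro n
    have hset : {π : Equiv.Perm (Fin n) | PAvoids π (sigmaP k 1 0)}
        = {π : Equiv.Perm (Fin n) | GFaux.good K π} :=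
      Set.ext fun π => GFaux.pavoids_iff hk π
    have h1 : avoidersCard k (sigmaP k 1 0) n = GFaux.countGood K n := by
      rw [avoidersCard, hset, ← Nat.card_coe_set_eq]
      rfl
    rw [h1, GFaux.countGood_eq]
  rw [ha, GFaux.inv_one_sub]
  ext n
  rw [PowerSeries.coeff_mk, map_add, GFaux.coeff_main, GFaux.coeff_tail, hcount n]
  rcases Nat.lt_or_ge n K with hn | hn
  · rw [if_neg (by omega), if_pos hn, GFaux.prod_min_lt (by omega)]
    simp
  · rw [if_pos hn, if_neg (by omega), GFaux.prod_min_ge hn]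
    push_cast
    ring
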